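/- The hereditarily finite sets HF form a transitive model of RST: HF is transitive, and HF satisfies extensionality, the comprehension schema for all formulas φ with φ ≻_RST {x} (i.e., for each such φ with parameters in HF, the set {x | φ} as computed in HF is an element of HF), and ∈-induction. -/

import Mathlib

mutual
/-- Terms of the language of RST: variables and class terms `{x | φ}`. -/
inductive RTerm : Type
  | var : ℕ → RTerm
  | cls : ℕ → RFormula → RTerm

/-- Formulas of the language of RST. -/
inductive RFormula : Type
  | mem : RTerm → RTerm → RFormula
  | eq  : RTerm → RTerm → RFormula
  | not : RFormula → RFormula
  | and : RFormula → RFormula → RFormula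
  | or  : RFormula → RFormula → RFormula
  | ex  : ℕ → RFormula → RFormula
end

mutual
/-- Free variables of a term. -/
def RTerm.fv : RTerm → Finset ℕ
  | .var n => {n}
  | .cls x φ => φ.fv.erase x

/-- Free variables of a formula. -/
def RFormula.fv : RFormula → Finset ℕ
  | .mem t s => t.fv ∪ s.fv
  | .eq t s => t.fv ∪ s.fv
  | .not φ => φ.fv
  | .and φ ψ => φ.fv ∪ ψ.fv
  | .or φ ψ => φ.fv ∪ ψ.fv
  | .ex x φ => φ.fv.erase x
end

/-- The safety relation `≻_RST`. -/
inductive Safe : RFormula → Finset ℕ → Prop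
  | atom_mem (t s : RTerm) : Safe (.mem t s) ∅
  | atom_eq (t s : RTerm) : Safe (.eq t s) ∅
  | eq_left (x : ℕ) (t : RTerm) : x ∉ t.fv → Safe (.eq (.var x) t) {x}
  | eq_right (x : ℕ) (t : RTerm) : x ∉ t.fv → Safe (.eq t (.var x)) {x}
  | mem_left (x : ℕ) (t : RTerm) : x ∉ t.fv → Safe (.mem (.var x) t) {x}
  | mem_self (x : ℕ) : Safe (.mem (.var x) (.var x)) {x}
  | not (φ : RFormula) : Safe φ ∅ → Safe (.not φ) ∅
  | or (φ ψ : RFormula) (X : Finset ℕ) : Safe φ X → Safe ψ X → Safe (.or φ ψ) X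
  | and (φ ψ : RFormula) (X Y : Finset ℕ) :
      Safe φ X → Safe ψ Y → Y ∩ φ.fv = ∅ → Safe (.and φ ψ) (X ∪ Y)
  | ex (y : ℕ) (φ : RFormula) (X : Finset ℕ) :
      y ∈ X → Safe φ X → Safe (.ex y φ) (X \ {y})

mutual
/-- Well-formed terms of RST: the body of a class term must be safe for its variable. -/
inductive WFTerm : RTerm → Prop
  | var (n : ℕ) : WFTerm (.var n)
  | cls (x : ℕ) (φ : RFormula) : WFForm φ → Safe φ {x} → WFTerm (.cls x φ)

/-- Well-formed formulas of RST. -/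
inductive WFForm : RFormula → Prop
  | mem {t s : RTerm} : WFTerm t → WFTerm s → WFForm (.mem t s)
  | eq {t s : RTerm} : WFTerm t → WFTerm s → WFForm (.eq t s)
  | not {φ : RFormula} : WFForm φ → WFForm (.not φ)
  | and {φ ψ : RFormula} : WFForm φ → WFForm ψ → WFForm (.and φ ψ)
  | or {φ ψ : RFormula} : WFForm φ → WFForm ψ → WFForm (.or φ ψ)
  | ex (x : ℕ) {φ : RFormula} : WFForm φ → WFForm (.ex x φ)
end
open scoped Classical

mutual
/-- Evaluation of a term in the cumulative universe `V` (modelled by `ZFSet`);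
a class term denotes the set which has exactly the members specified by its body,
if such a set exists, and `∅` otherwise. -/
noncomputable def RTerm.eval : RTerm → (ℕ → ZFSet.{0}) → ZFSet.{0}
  | .var n, v => v n
  | .cls x φ, v =>
      if h : ∃ s : ZFSet, ∀ z : ZFSet, z ∈ s ↔ (RFormula.sat' φ (Function.update v x z)).down.down then
        h.choose
      else ∅

/-- Satisfaction of a formula in the cumulative universe `V` (wrapped in `ULift (PLift _)`
so that it lives in the same universe as `ZFSet`). -/
noncomputable def RFormula.sat' : RFormula → (ℕ → ZFSet.{0}) → ULift.{1} (PLift Prop)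
  | .mem t s, v => ⟨⟨t.eval v ∈ s.eval v⟩⟩
  | .eq t s, v => ⟨⟨t.eval v = s.eval v⟩⟩
  | .not φ, v => ⟨⟨¬ (φ.sat' v).down.down⟩⟩
  | .and φ ψ, v => ⟨⟨(φ.sat' v).down.down ∧ (ψ.sat' v).down.down⟩⟩
  | .or φ ψ, v => ⟨⟨(φ.sat' v).down.down ∨ (ψ.sat' v).down.down⟩⟩
  | .ex x φ, v => ⟨⟨∃ z : ZFSet.{0}, (φ.sat' (Function.update v x z)).down.down⟩⟩
end

/-- Satisfaction of a formula of RST in the cumulative universe `V`. -/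
noncomputable def RFormula.sat (φ : RFormula) (v : ℕ → ZFSet.{0}) : Prop := (φ.sat' v).down.down

mutual
/-- Relativization to a transitive set `M`: evaluation of terms, where the class term
`{x ∣ φ}` is relativized to `{x ∣ x ∈ M ∧ φ_M}`. -/
noncomputable def RTerm.evalIn (M : ZFSet.{0}) : RTerm → (ℕ → ZFSet.{0}) → ZFSet.{0}
  | .var n, v => v n
  | .cls x φ, v => ZFSet.sep (fun z => (RFormula.satIn' M φ (Function.update v x z)).down.down) M

/-- Relativization to `M` of satisfaction: quantifiers are bounded to `M`. -/
noncomputable def RFormula.satIn' (M : ZFSet.{0}) : RFormula → (ℕ → ZFSet.{0}) → ULift.{1} (PLift Prop)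
  | .mem t s, v => ⟨⟨RTerm.evalIn M t v ∈ RTerm.evalIn M s v⟩⟩
  | .eq t s, v => ⟨⟨RTerm.evalIn M t v = RTerm.evalIn M s v⟩⟩
  | .not φ, v => ⟨⟨¬ (RFormula.satIn' M φ v).down.down⟩⟩
  | .and φ ψ, v => ⟨⟨(RFormula.satIn' M φ v).down.down ∧ (RFormula.satIn' M ψ v).down.down⟩⟩
  | .or φ ψ, v => ⟨⟨(RFormula.satIn' M φ v).down.down ∨ (RFormula.satIn' M ψ v).down.down⟩⟩
  | .ex x φ, v => ⟨⟨∃ z : ZFSet.{0}, z ∈ M ∧ (RFormula.satIn' M φ (Function.update v x z)).down.down⟩⟩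
end

/-- The relativization `φ_M` of a formula `φ` to `M`, as a satisfaction relation. -/
noncomputable def RFormula.satIn (M : ZFSet.{0}) (φ : RFormula) (v : ℕ → ZFSet.{0}) : Prop :=
  (φ.satIn' M v).down.down

/-- The finite levels of the cumulative hierarchy. -/
noncomputable def Vfin : ℕ → ZFSet.{0}
  | 0 => ∅
  | n + 1 => ZFSet.powerset (Vfin n)

/-- The set `HF = V_ω` of hereditarily finite sets. -/
noncomputable def HF : ZFSet.{0} := ZFSet.sUnion (ZFSet.range Vfin)

theorem ZFSet.mem_toSet (x y : ZFSet.{0}) : x ∈ y.toSet ↔ x ∈ y := Iff.rfl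

theorem ZFSet.toSet_injective : Function.Injective (ZFSet.toSet : ZFSet.{0} → Set ZFSet.{0}) :=
  SetLike.coe_injective


/-! ### Auxiliary lemmas -/

lemma mem_HF_iff {z : ZFSet.{0}} : z ∈ HF ↔ ∃ n, z ∈ Vfin n := by
  constructor
  · intro hz
    obtain ⟨w, hw, hzw⟩ := ZFSet.mem_sUnion.1 hz
    obtain ⟨n, rfl⟩ := ZFSet.mem_range.1 hw
    exact ⟨n, hzw⟩
  · rintro ⟨n, hz⟩
    exact ZFSet.mem_sUnion.2 ⟨Vfin n, ZFSet.mem_range.2 ⟨n, rfl⟩, hz⟩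

lemma Vfin_subset_succ (n : ℕ) : Vfin n ⊆ Vfin (n + 1) := by
  induction n with
  | zero => intro z hz; exact absurd hz (ZFSet.notMem_empty z)
  | succ n ih =>
    intro z hz
    rw [Vfin, ZFSet.mem_powerset] at hz ⊢
    exact fun y hy => ih (hz hy)

lemma Vfin_mono {m n : ℕ} (h : m ≤ n) : Vfin m ⊆ Vfin n := by
  induction h with
  | refl => exact fun z hz => hz
  | step _ ih => exact fun z hz => Vfin_subset_succ _ (ih hz)

lemma hf_transitive : HF.IsTransitive := by
  intro y hy z hz
  obtain ⟨n, hyn⟩ := mem_HF_iff.1 hy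
  cases n with
  | zero => exact absurd hyn (ZFSet.notMem_empty y)
  | succ n =>
    rw [Vfin, ZFSet.mem_powerset] at hyn
    exact mem_HF_iff.2 ⟨n, hyn hz⟩

lemma Vfin_toSet_finite (n : ℕ) : (Vfin n).toSet.Finite := by
  induction n with
  | zero => simp [Vfin]; exact Set.finite_empty.subset (fun a ha => absurd ha (ZFSet.notMem_empty a))
  | succ n ih =>
    have himg : (ZFSet.toSet '' (Vfin (n + 1)).toSet).Finite := by
      apply ih.finite_subsets.subset
      rintro s ⟨y, hy, rfl⟩
      rw [ZFSet.mem_toSet, Vfin, ZFSet.mem_powerset] at hy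
      intro a ha
      exact hy (by rwa [ZFSet.mem_toSet] at ha)
    exact (Set.finite_image_iff ZFSet.toSet_injective.injOn).1 himg

lemma hf_mem_finite {z : ZFSet.{0}} (hz : z ∈ HF) : z.toSet.Finite := by
  obtain ⟨n, hzn⟩ := mem_HF_iff.1 hz
  cases n with
  | zero => exact absurd hzn (ZFSet.notMem_empty z)
  | succ n =>
    rw [Vfin, ZFSet.mem_powerset] at hzn
    exact (Vfin_toSet_finite n).subset (fun a ha => hzn (by rwa [ZFSet.mem_toSet] at ha))

lemma finite_subset_HF_mem {A : ZFSet.{0}} (hsub : ∀ z ∈ A, z ∈ HF)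
    (hfin : A.toSet.Finite) : A ∈ HF := by
  have hrank : ∀ z ∈ A.toSet, ∃ n, z ∈ Vfin n := fun z hz =>
    mem_HF_iff.1 (hsub z ((ZFSet.mem_toSet z A).1 hz))
  have key : ∃ N, ∀ z ∈ A.toSet, z ∈ Vfin N := by
    classical
    set g : ZFSet.{0} → ℕ := fun z => if h : ∃ n, z ∈ Vfin n then Nat.find h else 0 with hg
    obtain ⟨N, hN⟩ := (hfin.image g).bddAbove
    refine ⟨N, fun z hz => ?_⟩
    have h := hrank z hz
    have hzg : z ∈ Vfin (g z) := by
      simp only [hg, dif_pos h]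
      exact Nat.find_spec h
    exact Vfin_mono (hN ⟨z, hz, rfl⟩) hzg
  obtain ⟨N, hN⟩ := key
  refine mem_HF_iff.2 ⟨N + 1, ?_⟩
  rw [Vfin, ZFSet.mem_powerset]
  exact fun z hz => hN z ((ZFSet.mem_toSet z A).2 hz)

/-! ### Congruence lemmas: evaluation and satisfaction depend only on free variables -/

mutual
theorem evalIn_congr (M : ZFSet.{0}) : ∀ (t : RTerm) (v w : ℕ → ZFSet.{0}),
    (∀ n ∈ t.fv, v n = w n) → t.evalIn M v = t.evalIn M w
  | .var n, v, w, h => h n (by simp [RTerm.fv])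
  | .cls x φ, v, w, h => by
    simp only [RTerm.evalIn]
    apply ZFSet.ext
    intro z
    simp only [ZFSet.mem_sep]
    constructor <;> intro ⟨hzM, hz⟩ <;> refine ⟨hzM, ?_⟩
    · exact (satIn_congr M φ (Function.update v x z) (Function.update w x z) (by
        intro n hn
        by_cases hnx : n = x
        · subst hnx; simp
        · simp only [Function.update_of_ne hnx]
          exact h n (by simp [RTerm.fv, Finset.mem_erase, hnx, hn]))).1 hz
    · exact (satIn_congr M φ (Function.update v x z) (Function.update w x z) (by
        intro n hn
        by_cases hnx : n = x
        · subst hnx; simp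
        · simp only [Function.update_of_ne hnx]
          exact h n (by simp [RTerm.fv, Finset.mem_erase, hnx, hn]))).2 hz

theorem satIn_congr (M : ZFSet.{0}) : ∀ (φ : RFormula) (v w : ℕ → ZFSet.{0}),
    (∀ n ∈ φ.fv, v n = w n) →
    ((RFormula.satIn' M φ v).down.down ↔ (RFormula.satIn' M φ w).down.down)
  | .mem t s, v, w, h => by
    simp only [RFormula.satIn']
    rw [evalIn_congr M t v w (fun n hn => h n (by simp [RFormula.fv, hn])),
        evalIn_congr M s v w (fun n hn => h n (by simp [RFormula.fv, hn]))]
  | .eq t s, v, w, h => by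
    simp only [RFormula.satIn']
    rw [evalIn_congr M t v w (fun n hn => h n (by simp [RFormula.fv, hn])),
        evalIn_congr M s v w (fun n hn => h n (by simp [RFormula.fv, hn]))]
  | .not φ, v, w, h => by
    simp only [RFormula.satIn']
    rw [satIn_congr M φ v w (fun n hn => h n (by simpa [RFormula.fv] using hn))]
  | .and φ ψ, v, w, h => by
    simp only [RFormula.satIn']
    rw [satIn_congr M φ v w (fun n hn => h n (by simp [RFormula.fv, hn])),
        satIn_congr M ψ v w (fun n hn => h n (by simp [RFormula.fv, hn]))]
  | .or φ ψ, v, w, h => by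
    simp only [RFormula.satIn']
    rw [satIn_congr M φ v w (fun n hn => h n (by simp [RFormula.fv, hn])),
        satIn_congr M ψ v w (fun n hn => h n (by simp [RFormula.fv, hn]))]
  | .ex x φ, v, w, h => by
    simp only [RFormula.satIn']
    constructor <;> rintro ⟨z, hzM, hz⟩ <;> refine ⟨z, hzM, ?_⟩
    · exact (satIn_congr M φ (Function.update v x z) (Function.update w x z) (by
        intro n hn
        by_cases hnx : n = x
        · subst hnx; simp
        · simp only [Function.update_of_ne hnx]
          exact h n (by simp [RFormula.fv, Finset.mem_erase, hnx, hn]))).1 hz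
    · exact (satIn_congr M φ (Function.update v x z) (Function.update w x z) (by
        intro n hn
        by_cases hnx : n = x
        · subst hnx; simp
        · simp only [Function.update_of_ne hnx]
          exact h n (by simp [RFormula.fv, Finset.mem_erase, hnx, hn]))).2 hz
end

/-- The set of valuations that agree with `v` outside `X`, take values in `HF`,
and satisfy `φ` relativized to `HF`. -/
def SafeSet (φ : RFormula) (X : Finset ℕ) (v : ℕ → ZFSet.{0}) : Set (ℕ → ZFSet.{0}) :=
  {w | (∀ n, n ∉ X → w n = v n) ∧ (∀ n, w n ∈ HF) ∧ RFormula.satIn HF φ w}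

lemma safeSet_empty_finite (φ : RFormula) (v : ℕ → ZFSet.{0}) :
    (SafeSet φ ∅ v).Finite := by
  apply (Set.finite_singleton v).subset
  rintro w ⟨h1, -, -⟩
  simpa using funext fun n => h1 n (Finset.notMem_empty n)

lemma sep_mem_HF (φ : RFormula) (x : ℕ) (v : ℕ → ZFSet.{0}) (hv : ∀ n, v n ∈ HF)
    (hS : (SafeSet φ {x} v).Finite) :
    ZFSet.sep (fun z => RFormula.satIn HF φ (Function.update v x z)) HF ∈ HF := by
  apply finite_subset_HF_mem
  · intro z hz
    exact (ZFSet.mem_sep.1 hz).1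
  · apply (hS.image (fun w => w x)).subset
    intro z hz
    rw [ZFSet.mem_toSet] at hz
    obtain ⟨hzHF, hsat⟩ := ZFSet.mem_sep.1 hz
    refine ⟨Function.update v x z, ⟨?_, ?_, hsat⟩, by simp⟩
    · intro n hn
      exact Function.update_of_ne (by simpa using hn) _ _
    · intro n
      by_cases h : n = x
      · subst h; simpa
      · simpa [Function.update_of_ne h] using hv n

mutual
theorem eval_mem_HF : ∀ (t : RTerm), WFTerm t → ∀ (v : ℕ → ZFSet.{0}),
    (∀ n, v n ∈ HF) → t.evalIn HF v ∈ HF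
  | .var n, _, v, hv => hv n
  | .cls x φ, hwt, v, hv => by
    have hsafe : Safe φ {x} := by cases hwt with | cls _ _ h1 h2 => exact h2
    have hwf : WFForm φ := by cases hwt with | cls _ _ h1 h2 => exact h1
    have hS := safe_finite φ {x} hsafe hwf v hv
    exact sep_mem_HF φ x v hv hS

theorem safe_finite : ∀ (φ : RFormula) (X : Finset ℕ), Safe φ X → WFForm φ →
    ∀ (v : ℕ → ZFSet.{0}), (∀ n, v n ∈ HF) → (SafeSet φ X v).Finite
  | _, _, .atom_mem t s, _, v, _ => safeSet_empty_finite _ v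
  | _, _, .atom_eq t s, _, v, _ => safeSet_empty_finite _ v
  | _, _, .not φ _, _, v, _ => safeSet_empty_finite _ v
  | _, _, .eq_left x t hx, _, v, hv => by
    apply (Set.finite_singleton (Function.update v x (t.evalIn HF v))).subset
    rintro w ⟨h1, h2, h3⟩
    have hte : t.evalIn HF w = t.evalIn HF v :=
      evalIn_congr HF t w v (fun n hn => h1 n (by
        simp only [Finset.mem_singleton]
        rintro rfl; exact hx hn))
    have hw : w x = t.evalIn HF v := by
      simp only [RFormula.satIn, RFormula.satIn', RTerm.evalIn] at h3
      rw [← hte]; exact h3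
    have hweq : w = Function.update v x (t.evalIn HF v) := funext fun n => by
      by_cases hnx : n = x
      · subst hnx; simp [hw]
      · simp only [Function.update_of_ne hnx]
        exact h1 n (by simp [hnx])
    simp [hweq]
  | _, _, .eq_right x t hx, _, v, hv => by
    apply (Set.finite_singleton (Function.update v x (t.evalIn HF v))).subset
    rintro w ⟨h1, h2, h3⟩
    have hte : t.evalIn HF w = t.evalIn HF v :=
      evalIn_congr HF t w v (fun n hn => h1 n (by
        simp only [Finset.mem_singleton]
        rintro rfl; exact hx hn))
    have hw : w x = t.evalIn HF v := by
      simp only [RFormula.satIn, RFormula.satIn', RTerm.evalIn] at h3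
      rw [← hte]; exact h3.symm
    have hweq : w = Function.update v x (t.evalIn HF v) := funext fun n => by
      by_cases hnx : n = x
      · subst hnx; simp [hw]
      · simp only [Function.update_of_ne hnx]
        exact h1 n (by simp [hnx])
    simp [hweq]
  | _, _, .mem_left x t hx, hwf, v, hv => by
    have hwt : WFTerm t := by cases hwf with | mem h1 h2 => exact h2
    have hb : t.evalIn HF v ∈ HF := eval_mem_HF t hwt v hv
    apply ((hf_mem_finite hb).image (fun z => Function.update v x z)).subset
    rintro w ⟨h1, h2, h3⟩
    have hte : t.evalIn HF w = t.evalIn HF v :=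
      evalIn_congr HF t w v (fun n hn => h1 n (by
        simp only [Finset.mem_singleton]
        rintro rfl; exact hx hn))
    have hw : w x ∈ t.evalIn HF v := by
      simp only [RFormula.satIn, RFormula.satIn', RTerm.evalIn] at h3
      rw [← hte]; exact h3
    refine ⟨w x, (ZFSet.mem_toSet _ _).2 hw, ?_⟩
    funext n
    by_cases hnx : n = x
    · subst hnx; simp
    · simp only [Function.update_of_ne hnx]
      exact (h1 n (by simp [hnx])).symm
  | _, _, .mem_self x, _, v, hv => by
    apply Set.finite_empty.subset
    rintro w ⟨h1, h2, h3⟩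
    simp only [RFormula.satIn, RFormula.satIn', RTerm.evalIn] at h3
    exact absurd h3 (ZFSet.mem_irrefl _)
  | _, _, .or φ ψ X hφ hψ, hwf, v, hv => by
    have hwφ : WFForm φ := by cases hwf with | or h1 h2 => exact h1
    have hwψ : WFForm ψ := by cases hwf with | or h1 h2 => exact h2
    apply ((safe_finite φ X hφ hwφ v hv).union (safe_finite ψ X hψ hwψ v hv)).subset
    rintro w ⟨h1, h2, h3⟩
    simp only [RFormula.satIn, RFormula.satIn'] at h3
    rcases h3 with h3 | h3
    · exact Or.inl ⟨h1, h2, h3⟩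
    · exact Or.inr ⟨h1, h2, h3⟩
  | _, _, .and φ ψ X Y hφ hψ hYfv, hwf, v, hv => by
    have hwφ : WFForm φ := by cases hwf with | and h1 h2 => exact h1
    have hwψ : WFForm ψ := by cases hwf with | and h1 h2 => exact h2
    have hSφ := safe_finite φ X hφ hwφ v hv
    apply (hSφ.biUnion (fun w₁ hw₁ => safe_finite ψ Y hψ hwψ w₁ hw₁.2.1)).subset
    rintro w ⟨h1, h2, h3⟩
    simp only [RFormula.satIn, RFormula.satIn'] at h3
    obtain ⟨h3φ, h3ψ⟩ := h3
    classical
    set w₁ : ℕ → ZFSet.{0} := fun n => if n ∈ X then w n else v n with hw₁def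
    have hw₁HF : ∀ n, w₁ n ∈ HF := fun n => by
      by_cases h : n ∈ X <;> simp only [hw₁def, h, if_true, if_false] <;>
        [exact h2 n; exact hv n]
    have hagree : ∀ n ∈ φ.fv, w n = w₁ n := by
      intro n hn
      by_cases hX : n ∈ X
      · simp [hw₁def, hX]
      · have hY : n ∉ Y := fun hY => by
          have hmem : n ∈ Y ∩ φ.fv := Finset.mem_inter.2 ⟨hY, hn⟩
          rw [hYfv] at hmem
          exact absurd hmem (Finset.notMem_empty n)
        simp only [hw₁def, hX, if_false]
        exact h1 n (by simp [hX, hY])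
    have h3φ' : RFormula.satIn HF φ w₁ := (satIn_congr HF φ w w₁ hagree).1 h3φ
    refine Set.mem_biUnion (show w₁ ∈ SafeSet φ X v from ⟨?_, hw₁HF, h3φ'⟩)
      (show w ∈ SafeSet ψ Y w₁ from ⟨?_, h2, h3ψ⟩)
    · intro n hn; simp [hw₁def, hn]
    · intro n hn
      by_cases hX : n ∈ X
      · simp [hw₁def, hX]
      · simp only [hw₁def, hX, if_false]
        exact h1 n (by simp [hX, hn])
  | _, _, .ex y φ X hy hφ, hwf, v, hv => by
    have hwφ : WFForm φ := by cases hwf with | ex _ h1 => exact h1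
    apply ((safe_finite φ X hφ hwφ v hv).image
      (fun w' => Function.update w' y (v y))).subset
    rintro w ⟨h1, h2, h3⟩
    simp only [RFormula.satIn, RFormula.satIn'] at h3
    obtain ⟨z, hzHF, hz⟩ := h3
    refine ⟨Function.update w y z, ⟨?_, ?_, hz⟩, ?_⟩
    · intro n hn
      have hny : n ≠ y := fun e => hn (e ▸ hy)
      rw [Function.update_of_ne hny]
      exact h1 n (by simp [hn, hny])
    · intro n
      by_cases hny : n = y
      · subst hny; simpa
      · simpa [Function.update_of_ne hny] using h2 n
    · funext n
      rcases eq_or_ne n y with rfl | hny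
      · simp only [Function.update_self]
        exact (h1 _ (by simp)).symm
      · simp [Function.update_of_ne hny]
end

/-- `HF` is a transitive model of RST: it is transitive and satisfies extensionality,
the comprehension schema for all `≻_RST`-safe formulas with parameters in `HF`
(the set `{x ∈ HF ∣ φ_HF}` is an element of `HF`), and the ∈-induction schema. -/
theorem hf_models_rst :
    HF.IsTransitive ∧
    (∀ x ∈ HF, ∀ y ∈ HF, (∀ z : ZFSet.{0}, z ∈ x ↔ z ∈ y) → x = y) ∧
    (∀ (φ : RFormula) (x : ℕ) (v : ℕ → ZFSet.{0}), WFForm φ → Safe φ {x} →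
      (∀ n, v n ∈ HF) →
        ZFSet.sep (fun z => RFormula.satIn HF φ (Function.update v x z)) HF ∈ HF) ∧
    (∀ (φ : RFormula) (i : ℕ) (v : ℕ → ZFSet.{0}), (∀ n, v n ∈ HF) →
      (∀ x ∈ HF, (∀ y ∈ x, RFormula.satIn HF φ (Function.update v i y)) →
        RFormula.satIn HF φ (Function.update v i x)) →
      ∀ x ∈ HF, RFormula.satIn HF φ (Function.update v i x)) := by
  refine ⟨hf_transitive, ?_, ?_, ?_⟩
  · intro x _ y _ h
    exact ZFSet.ext h
  · intro φ x v hwf hsafe hv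
    exact sep_mem_HF φ x v hv (safe_finite φ {x} hsafe hwf v hv)
  · intro φ i v hv hind x
    induction x using ZFSet.inductionOn with
    | _ x IH =>
      intro hx
      exact hind x hx (fun y hy => IH y hy (hf_transitive x hx hy))
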